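/- arXiv:2210.12159 — 2 statements merged into one kernel-verified Lean document; each statement's English description precedes it below -/
import Mathlib

section
/- For every positive integer n and all integers r, s, j, 10 * ∑_{k=0}^{n} C(2n, 2k) * F(j(2k+r)) * F(j(2k+s)) = (L(j)^(2n) + 5^n * F(j)^(2n)) * L(j(2n+r+s)) - (-1)^(j*s) * 4^n * L(j(r-s)). -/
open Finset

lemma sum_even_indices {R : Type*} [AddCommMonoid R] (g : ℕ → R) (hodd : ∀ m, Odd m → g m = 0)
    (N : ℕ) : ∑ m ∈ range (2*N+1), g m = ∑ k ∈ range (N+1), g (2*k) := by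
  induction N with
  | zero => simp
  | succ N ih =>
      have h1 : 2*(N+1)+1 = (2*N+1) + 1 + 1 := by ring
      rw [h1, sum_range_succ, sum_range_succ, ih, hodd (2*N+1) ⟨N, by ring⟩,
        sum_range_succ (fun k => g (2*k)) (N+1)]
      simp [show 2*N+1+1 = 2*(N+1) by ring]

lemma even_sum (u v : ℝ) (n : ℕ) :
    2 * ∑ k ∈ range (n+1), ((2*n).choose (2*k) : ℝ) * u^(2*k) * v^(2*(n-k))
      = (u+v)^(2*n) + (u-v)^(2*n) := by
  have hg : ∀ m, Odd m → (((2*n).choose m : ℝ) * u^m * v^(2*n-m)) * (1 + (-1)^m) = 0 := by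
    intro m hm
    rw [hm.neg_one_pow]
    ring
  have h := sum_even_indices (fun m => (((2*n).choose m : ℝ) * u^m * v^(2*n-m)) * (1 + (-1)^m)) hg n
  have hL : ∑ m ∈ range (2*n+1), (((2*n).choose m : ℝ) * u^m * v^(2*n-m)) * (1 + (-1)^m)
      = (u+v)^(2*n) + (u-v)^(2*n) := by
    have h1 : (u+v)^(2*n) = ∑ m ∈ range (2*n+1), u^m * v^(2*n-m) * ((2*n).choose m : ℝ) :=
      add_pow u v (2*n)
    have h2 : (u-v)^(2*n) = ∑ m ∈ range (2*n+1), u^m * (-v)^(2*n-m) * ((2*n).choose m : ℝ) := by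
      have := add_pow u (-v) (2*n)
      rw [← this]; ring_nf
    rw [h1, h2, ← sum_add_distrib]
    apply sum_congr rfl
    intro m hm
    have hm' : m ≤ 2*n := by simp at hm; omega
    have hpar : (-v)^(2*n-m) = (-1)^m * v^(2*n-m) := by
      rw [neg_pow]
      congr 1
      rcases Nat.even_or_odd m with he | ho
      · obtain ⟨t, ht⟩ := he
        rw [Even.neg_one_pow ⟨n - t, by omega⟩, Even.neg_one_pow ⟨t, ht⟩]
      · obtain ⟨t, ht⟩ := ho
        rw [Odd.neg_one_pow ⟨n - t - 1, by omega⟩, Odd.neg_one_pow ⟨t, by omega⟩]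
    rw [hpar]
    ring
  rw [hL] at h
  rw [h, Finset.mul_sum]
  apply sum_congr rfl
  intro k hk
  simp at hk
  have heven : Even (2*k) := ⟨k, by ring⟩
  rw [heven.neg_one_pow]
  have h2 : 2*n - 2*k = 2*(n-k) := by omega
  rw [h2]
  ring

lemma key_lemma (A B : ℝ) (n : ℕ) (h : A*B = 1 ∨ A*B = -1) :
    ((A+B)^(2*n) + (A-B)^(2*n)) * A^(2*n) = (A^2+1)^(2*n) + (A^2-1)^(2*n) := by
  rw [add_mul, ← mul_pow, ← mul_pow]
  rcases h with h | h
  · have h1 : (A+B)*A = A^2+1 := by linear_combination h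
    have h2 : (A-B)*A = A^2-1 := by linear_combination -h
    rw [h1, h2]
  · have h1 : (A+B)*A = A^2-1 := by linear_combination h
    have h2 : (A-B)*A = A^2+1 := by linear_combination -h
    rw [h1, h2]
    ring

lemma negone_zpow_natAbs (t : ℤ) : ((-1:ℝ))^t = (-1:ℝ)^t.natAbs := by
  rcases Int.natAbs_eq t with h | h
  · conv_lhs => rw [h]
    rw [zpow_natCast]
  · conv_lhs => rw [h]
    rw [zpow_neg, zpow_natCast]
    rcases Nat.even_or_odd t.natAbs with he | ho
    · rw [he.neg_one_pow]; norm_num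
    · rw [ho.neg_one_pow]; norm_num

lemma zpow_step (x : ℝ) (hx0 : x ≠ 0) (hx : x^2 = x + 1) (m : ℤ) :
    x^(m+2) = x^(m+1) + x^m := by
  have h1 : x^(m+2) = x^m * x^(2:ℤ) := zpow_add₀ hx0 m 2
  have h2 : x^(m+1) = x^m * x := zpow_add_one₀ hx0 m
  have h3 : x^(2:ℤ) = x^(2:ℕ) := zpow_ofNat x 2
  rw [h1, h2, h3, hx]
  ring

lemma zpow_lin (x : ℝ) (hx : x ≠ 0) (k : ℕ) (t : ℤ) :
    x^(2*(k:ℤ)+t) = (x^2)^k * x^t := by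
  rw [zpow_add₀ hx]
  congr 1
  rw [zpow_mul, zpow_ofNat, zpow_natCast]

lemma gen_binet (G : ℤ → ℤ) (hG : ∀ j : ℤ, G j = G (j - 1) + G (j - 2)) (w : ℤ → ℝ)
    (hw0 : w 0 = (G 0 : ℝ)) (hw1 : w 1 = (G 1 : ℝ))
    (hwrec : ∀ m : ℤ, w (m+2) = w (m+1) + w m) :
    ∀ m : ℤ, (G m : ℝ) = w m := by
  have key : ∀ m : ℤ, ((G m : ℝ) = w m) ∧ ((G (m+1) : ℝ) = w (m+1)) := by
    intro m
    induction m using Int.induction_on with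
    | zero => exact ⟨hw0.symm, by norm_num [hw1]⟩
    | succ i ih =>
        refine ⟨ih.2, ?_⟩
        have hGr : G (i+1+1) = G (i+1) + G i := by
          have := hG (i+2)
          have e1 : (i:ℤ)+2-1 = i+1 := by ring
          have e2 : (i:ℤ)+2-2 = i := by ring
          rw [e1, e2] at this
          rw [show (i:ℤ)+1+1 = i+2 by ring]
          exact this
        have hwr : w (i+1+1) = w (i+1) + w i := by
          rw [show (i:ℤ)+1+1 = i+2 by ring]
          exact hwrec i
        rw [hGr, hwr]
        push_cast
        rw [ih.1, ih.2]
    | pred i ih =>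
        have e0 : -(i:ℤ)-1+1 = -i := by ring
        refine ⟨?_, by rw [e0]; exact ih.1⟩
        have hGr : G (-i+1) = G (-i) + G (-i-1) := by
          have := hG (-i+1)
          have e1 : -(i:ℤ)+1-1 = -i := by ring
          have e2 : -(i:ℤ)+1-2 = -i-1 := by ring
          rwa [e1, e2] at this
        have hwr : w (-i+1) = w (-i) + w (-i-1) := by
          have := hwrec (-i-1)
          have e1 : -(i:ℤ)-1+2 = -i+1 := by ring
          have e2 : -(i:ℤ)-1+1 = -i := by ring
          rwa [e1, e2] at this
        have hcast : (G (-i-1) : ℝ) = (G (-i+1) : ℝ) - (G (-i) : ℝ) := by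
          rw [hGr]; push_cast; ring
        rw [hcast, ih.1, ih.2, hwr]
        ring
  exact fun m => (key m).1

theorem stmt17 (F : ℤ → ℤ) (hF0 : F 0 = 0) (hF1 : F 1 = 1)
    (hF : ∀ j : ℤ, F j = F (j - 1) + F (j - 2)) (L : ℤ → ℤ) (hL0 : L 0 = 2) (hL1 : L 1 = 1)
    (hL : ∀ j : ℤ, L j = L (j - 1) + L (j - 2)) (n : ℕ) (hn : 0 < n) (r s j : ℤ) :
    10 * ∑ k ∈ Finset.range (n + 1),
        ((2 * n).choose (2 * k) : ℤ) * F (j * (2 * (k : ℤ) + r)) * F (j * (2 * (k : ℤ) + s))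
      = (L j ^ (2 * n) + 5 ^ n * F j ^ (2 * n)) * L (j * (2 * (n : ℤ) + r + s))
        - (-1 : ℤ) ^ (j * s).natAbs * 4 ^ n * L (j * (r - s)) := by
  have h5 : (5:ℝ) = 5 := rfl
  set s5 : ℝ := Real.sqrt 5 with hs5def
  have hs5sq : s5^2 = 5 := Real.sq_sqrt (by norm_num)
  have hs5pos : 0 < s5 := Real.sqrt_pos.mpr (by norm_num)
  have hs5ne : s5 ≠ 0 := ne_of_gt hs5pos
  set ph : ℝ := (1 + s5)/2 with hph
  set ps : ℝ := (1 - s5)/2 with hps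
  have hphps : ph * ps = -1 := by
    rw [hph, hps]
    field_simp
    linear_combination -hs5sq
  have hph0 : ph ≠ 0 := by
    intro h; rw [h] at hphps; norm_num at hphps
  have hps0 : ps ≠ 0 := by
    intro h; rw [h] at hphps; norm_num at hphps
  have hphsq : ph^2 = ph + 1 := by
    rw [hph]; field_simp; linear_combination hs5sq
  have hpssq : ps^2 = ps + 1 := by
    rw [hps]; field_simp; linear_combination hs5sq
  have hFb : ∀ m : ℤ, (F m : ℝ) = (ph^m - ps^m)/s5 := by
    apply gen_binet F hF
    · rw [hF0]; norm_num
    · rw [hF1]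
      push_cast
      rw [zpow_one, zpow_one, hph, hps]
      field_simp
      ring
    · intro m
      rw [zpow_step ph hph0 hphsq, zpow_step ps hps0 hpssq]
      ring
  have hLb : ∀ m : ℤ, (L m : ℝ) = ph^m + ps^m := by
    apply gen_binet L hL
    · rw [hL0]; push_cast; norm_num
    · rw [hL1]
      push_cast
      rw [zpow_one, zpow_one, hph, hps]
      ring
    · intro m
      rw [zpow_step ph hph0 hphsq, zpow_step ps hps0 hpssq]
      ring
  have hmain : 10 * ∑ k ∈ Finset.range (n + 1),
        ((2 * n).choose (2 * k) : ℝ) * (F (j * (2 * (k : ℤ) + r)) : ℝ) * (F (j * (2 * (k : ℤ) + s)) : ℝ)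
      = ((L j : ℝ) ^ (2 * n) + 5 ^ n * (F j : ℝ) ^ (2 * n)) * (L (j * (2 * (n : ℤ) + r + s)) : ℝ)
        - (-1 : ℝ) ^ (j * s).natAbs * 4 ^ n * (L (j * (r - s)) : ℝ) := by
    set A : ℝ := ph^j with hA
    set B : ℝ := ps^j with hB
    have hA0 : A ≠ 0 := zpow_ne_zero _ hph0
    have hB0 : B ≠ 0 := zpow_ne_zero _ hps0
    have hABe : A * B = ((-1:ℝ))^j := by rw [hA, hB, ← mul_zpow, hphps]
    have hABpm : A*B = 1 ∨ A*B = -1 := by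
      rw [hABe]
      rcases Int.even_or_odd j with he | ho
      · left; exact he.neg_one_zpow
      · right; exact ho.neg_one_zpow
    have hABsq : (A*B)^2 = 1 := by rcases hABpm with h | h <;> rw [h] <;> norm_num
    -- per-term rewriting
    have hterm : ∀ k ∈ Finset.range (n+1),
        10 * (((2*n).choose (2*k):ℝ) * (F (j*(2*(k:ℤ)+r)):ℝ) * (F (j*(2*(k:ℤ)+s)):ℝ))
        = (2*((2*n).choose (2*k):ℝ)*(A^2)^(2*k)) * (A^(r+s))
          + (2*((2*n).choose (2*k):ℝ)*(B^2)^(2*k)) * (B^(r+s))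
          - (2*((2*n).choose (2*k):ℝ)) * ((A*B)^s * (A^(r-s)+B^(r-s))) := by
      intro k _
      set C : ℝ := ((2*n).choose (2*k):ℝ) with hC
      have ephr : ph^(j*(2*(k:ℤ)+r)) = (A^2)^k * A^r := by
        rw [zpow_mul]; exact zpow_lin A hA0 k r
      have ephs : ph^(j*(2*(k:ℤ)+s)) = (A^2)^k * A^s := by
        rw [zpow_mul]; exact zpow_lin A hA0 k s
      have epsr : ps^(j*(2*(k:ℤ)+r)) = (B^2)^k * B^r := by
        rw [zpow_mul]; exact zpow_lin B hB0 k r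
      have epss : ps^(j*(2*(k:ℤ)+s)) = (B^2)^k * B^s := by
        rw [zpow_mul]; exact zpow_lin B hB0 k s
      have e1 : (F (j*(2*(k:ℤ)+r)):ℝ) * s5 = (A^2)^k * A^r - (B^2)^k * B^r := by
        rw [hFb, div_mul_cancel₀ _ hs5ne, ephr, epsr]
      have e2 : (F (j*(2*(k:ℤ)+s)):ℝ) * s5 = (A^2)^k * A^s - (B^2)^k * B^s := by
        rw [hFb, div_mul_cancel₀ _ hs5ne, ephs, epss]
      have huw : (A^2)^k * (B^2)^k = 1 := by
        rw [← mul_pow, show A^2*B^2 = (A*B)^2 by ring, hABsq, one_pow]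
      have hArs : A^(r+s) = A^r * A^s := zpow_add₀ hA0 r s
      have hBrs : B^(r+s) = B^r * B^s := zpow_add₀ hB0 r s
      have hAr : A^r = A^(r-s) * A^s := by rw [← zpow_add₀ hA0, sub_add_cancel]
      have hBr : B^r = B^(r-s) * B^s := by rw [← zpow_add₀ hB0, sub_add_cancel]
      have hcross : A^r * B^s + A^s * B^r = (A*B)^s * (A^(r-s)+B^(r-s)) := by
        rw [hAr, hBr, mul_zpow]
        ring
      have step1 : 10 * (C * (F (j*(2*(k:ℤ)+r)):ℝ) * (F (j*(2*(k:ℤ)+s)):ℝ))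
          = 2 * C * ((F (j*(2*(k:ℤ)+r)):ℝ) * s5) * ((F (j*(2*(k:ℤ)+s)):ℝ) * s5) := by
        linear_combination (-2*C*(F (j*(2*(k:ℤ)+r)):ℝ)*(F (j*(2*(k:ℤ)+s)):ℝ)) * hs5sq
      rw [step1, e1, e2]
      have hu2 : (A^2)^(2*k) = (A^2)^k * (A^2)^k := by rw [two_mul, pow_add]
      have hw2 : (B^2)^(2*k) = (B^2)^k * (B^2)^k := by rw [two_mul, pow_add]
      rw [hu2, hw2, hArs, hBrs]
      linear_combination (-2*C*((A^2)^k * (B^2)^k))*hcross + (-2*C*((A*B)^s * (A^(r-s)+B^(r-s))))*huw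
    rw [Finset.mul_sum, Finset.sum_congr rfl hterm, Finset.sum_sub_distrib,
      Finset.sum_add_distrib, ← Finset.sum_mul, ← Finset.sum_mul, ← Finset.sum_mul]
    -- the three sums
    have hsumA : ∑ k ∈ Finset.range (n+1), 2*((2*n).choose (2*k):ℝ)*(A^2)^(2*k)
        = (A^2+1)^(2*n) + (A^2-1)^(2*n) := by
      have h := even_sum (A^2) 1 n
      calc ∑ k ∈ Finset.range (n+1), 2*((2*n).choose (2*k):ℝ)*(A^2)^(2*k)
          = 2 * ∑ k ∈ Finset.range (n+1), ((2*n).choose (2*k):ℝ)*(A^2)^(2*k)*(1:ℝ)^(2*(n-k)) := by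
            rw [Finset.mul_sum]; apply Finset.sum_congr rfl; intro k _; rw [one_pow]; ring
        _ = (A^2+1)^(2*n) + (A^2-1)^(2*n) := h
    have hsumB : ∑ k ∈ Finset.range (n+1), 2*((2*n).choose (2*k):ℝ)*(B^2)^(2*k)
        = (B^2+1)^(2*n) + (B^2-1)^(2*n) := by
      have h := even_sum (B^2) 1 n
      calc ∑ k ∈ Finset.range (n+1), 2*((2*n).choose (2*k):ℝ)*(B^2)^(2*k)
          = 2 * ∑ k ∈ Finset.range (n+1), ((2*n).choose (2*k):ℝ)*(B^2)^(2*k)*(1:ℝ)^(2*(n-k)) := by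
            rw [Finset.mul_sum]; apply Finset.sum_congr rfl; intro k _; rw [one_pow]; ring
        _ = (B^2+1)^(2*n) + (B^2-1)^(2*n) := h
    have hsumC : ∑ k ∈ Finset.range (n+1), 2*((2*n).choose (2*k):ℝ) = (4:ℝ)^n := by
      calc ∑ k ∈ Finset.range (n+1), 2*((2*n).choose (2*k):ℝ)
          = 2 * ∑ k ∈ Finset.range (n+1), ((2*n).choose (2*k):ℝ)*(1:ℝ)^(2*k)*(1:ℝ)^(2*(n-k)) := by
            rw [Finset.mul_sum]; apply Finset.sum_congr rfl; intro k _; rw [one_pow, one_pow]; ring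
        _ = ((1:ℝ)+1)^(2*n) + ((1:ℝ)-1)^(2*n) := even_sum 1 1 n
        _ = (4:ℝ)^n := by
            rw [sub_self, zero_pow (by omega : 2*n ≠ 0), add_zero]
            norm_num [pow_mul]
    rw [hsumA, hsumB, hsumC]
    -- right-hand side rewrites
    have hLj : (L j : ℝ) = A + B := hLb j
    have hFj : (F j : ℝ) = (A - B)/s5 := hFb j
    have h5F : (5:ℝ)^n * ((A-B)/s5)^(2*n) = (A-B)^(2*n) := by
      have hs : s5^(2*n) = 5^n := by rw [pow_mul, hs5sq]
      rw [div_pow, hs]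
      field_simp
    have hLbig : (L (j*(2*(n:ℤ)+r+s)) : ℝ) = (A^2)^n * A^(r+s) + (B^2)^n * B^(r+s) := by
      rw [hLb]
      congr 1
      · rw [zpow_mul, show (2*(n:ℤ)+r+s) = 2*(n:ℤ)+(r+s) by ring]
        exact zpow_lin A hA0 n (r+s)
      · rw [zpow_mul, show (2*(n:ℤ)+r+s) = 2*(n:ℤ)+(r+s) by ring]
        exact zpow_lin B hB0 n (r+s)
    have hLrs : (L (j*(r-s)) : ℝ) = A^(r-s) + B^(r-s) := by
      rw [hLb, zpow_mul, zpow_mul]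
    have hneg : ((-1:ℝ))^((j*s).natAbs) = (A*B)^s := by
      rw [← negone_zpow_natAbs, zpow_mul, ← hABe]
    rw [hLj, hFj, h5F, hLbig, hLrs, hneg]
    -- final algebra
    have k1 := key_lemma A B n hABpm
    have k2 := key_lemma B A n (by rcases hABpm with h | h; exacts [Or.inl (by rwa [mul_comm]), Or.inr (by rwa [mul_comm])])
    have hBA : (B-A)^(2*n) = (A-B)^(2*n) := by
      rw [show B-A = -(A-B) by ring, Even.neg_pow ⟨n, by ring⟩]
    rw [hBA, add_comm B A] at k2
    have hpmA : A^(2*n) = (A^2)^n := pow_mul A 2 n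
    have hpmB : B^(2*n) = (B^2)^n := pow_mul B 2 n
    rw [← hpmA, ← hpmB]
    linear_combination (-(A^(r+s))) * k1 - B^(r+s) * k2
  exact_mod_cast hmain
end

section
/- For all integers k, r, s, t, the identity 5*F(k+r)*F(k+s)*F(k+t) = F(3k+r+s+t) - (-1)^(k+r)*F(k+s+t-r) - (-1)^(k+t)*L(s-t)*F(k+r) holds. -/
/-- Two sequences satisfying the Fibonacci recurrence and agreeing at 0 and 1 agree everywhere. -/
lemma fibLikeUnique (G H : ℤ → ℤ) (hG : ∀ j : ℤ, G j = G (j - 1) + G (j - 2))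
    (hH : ∀ j : ℤ, H j = H (j - 1) + H (j - 2)) (h0 : G 0 = H 0) (h1 : G 1 = H 1) :
    ∀ n : ℤ, G n = H n := by
  suffices h : ∀ n : ℤ, G n = H n ∧ G (n + 1) = H (n + 1) by exact fun n => (h n).1
  intro n
  induction n using Int.induction_on with
  | zero => exact ⟨h0, by simpa using h1⟩
  | succ i ih =>
    refine ⟨ih.2, ?_⟩
    have g2 := hG ((i : ℤ) + 1 + 1); have hh2 := hH ((i : ℤ) + 1 + 1)
    rw [show (i : ℤ) + 1 + 1 - 1 = (i : ℤ) + 1 by ring,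
        show (i : ℤ) + 1 + 1 - 2 = (i : ℤ) by ring] at g2 hh2
    rw [g2, hh2, ih.1, ih.2]
  | pred i ih =>
    have g2 := hG (-(i : ℤ) + 1); have hh2 := hH (-(i : ℤ) + 1)
    rw [show -(i : ℤ) + 1 - 1 = -(i : ℤ) by ring,
        show -(i : ℤ) + 1 - 2 = -(i : ℤ) - 1 by ring] at g2 hh2
    constructor
    · linarith [ih.1, ih.2]
    · rw [show -(i : ℤ) - 1 + 1 = -(i : ℤ) by ring]; exact ih.1

theorem stmt19 (F : ℤ → ℤ) (hF0 : F 0 = 0) (hF1 : F 1 = 1)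
    (hF : ∀ j : ℤ, F j = F (j - 1) + F (j - 2)) (L : ℤ → ℤ) (hL0 : L 0 = 2) (hL1 : L 1 = 1)
    (hL : ∀ j : ℤ, L j = L (j - 1) + L (j - 2)) (k r s t : ℤ) :
    5 * F (k + r) * F (k + s) * F (k + t)
      = F (3 * k + r + s + t) - (-1 : ℤ) ^ (k + r).natAbs * F (k + s + t - r)
        - (-1 : ℤ) ^ (k + t).natAbs * L (s - t) * F (k + r) := by
  -- basic values
  have hFm1 : F (-1) = 1 := by
    have h := hF 1; norm_num at h; linarith
  have hF2v : F 2 = 1 := by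
    have h := hF 2; norm_num at h; omega
  have hFstep : ∀ j : ℤ, F (j + 1) = F j + F (j - 1) := by
    intro j
    have h := hF (j + 1)
    rw [show j + 1 - 1 = j by ring, show j + 1 - 2 = j - 1 by ring] at h
    exact h
  -- sign flip lemma
  have eflip : ∀ n : ℤ, (-1 : ℤ) ^ (n + 1).natAbs = -(-1 : ℤ) ^ n.natAbs := by
    intro n
    rcases Int.even_or_odd n with h | h
    · linarith [((Int.natAbs_even.mpr h).neg_one_pow : ((-1:ℤ)) ^ n.natAbs = 1), ((Int.natAbs_odd.mpr h.add_one).neg_one_pow : ((-1:ℤ)) ^ (n+1).natAbs = -1)]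
    · linarith [((Int.natAbs_odd.mpr h).neg_one_pow : ((-1:ℤ)) ^ n.natAbs = -1), ((Int.natAbs_even.mpr h.add_one).neg_one_pow : ((-1:ℤ)) ^ (n+1).natAbs = 1)]
  -- addition formula
  have Fadd : ∀ m n : ℤ, F (m + n + 1) = F (m + 1) * F (n + 1) + F m * F n := by
    intro m
    refine fibLikeUnique (fun n => F (m + n + 1)) (fun n => F (m + 1) * F (n + 1) + F m * F n)
      ?_ ?_ ?_ ?_
    · intro j
      show F (m + j + 1) = F (m + (j - 1) + 1) + F (m + (j - 2) + 1)
      have h := hF (m + j + 1)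
      rw [show m + j + 1 - 1 = m + (j - 1) + 1 by ring,
          show m + j + 1 - 2 = m + (j - 2) + 1 by ring] at h
      exact h
    · intro j
      show F (m + 1) * F (j + 1) + F m * F j
          = (F (m + 1) * F (j - 1 + 1) + F m * F (j - 1))
            + (F (m + 1) * F (j - 2 + 1) + F m * F (j - 2))
      rw [show j - 1 + 1 = j by ring, show j - 2 + 1 = j - 1 by ring]
      have h1 := hFstep j
      have h2 := hF j
      linear_combination F (m + 1) * h1 + F m * h2
    · show F (m + 0 + 1) = F (m + 1) * F (0 + 1) + F m * F 0
      rw [show m + 0 + 1 = m + 1 by ring]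
      norm_num [hF0, hF1]
    · show F (m + 1 + 1) = F (m + 1) * F (1 + 1) + F m * F 1
      have h := hFstep (m + 1)
      rw [show m + 1 - 1 = m by ring] at h
      rw [h, hF1, show (1 : ℤ) + 1 = 2 by norm_num, hF2v]
      ring
  -- subtraction formula
  have Fsub : ∀ m n : ℤ,
      (-1 : ℤ) ^ n.natAbs * F (m - n) = F m * F (n - 1) - F (m - 1) * F n := by
    intro m
    refine fibLikeUnique (fun n => (-1 : ℤ) ^ n.natAbs * F (m - n))
      (fun n => F m * F (n - 1) - F (m - 1) * F n) ?_ ?_ ?_ ?_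
    · intro j
      show (-1 : ℤ) ^ j.natAbs * F (m - j)
          = (-1 : ℤ) ^ (j - 1).natAbs * F (m - (j - 1))
            + (-1 : ℤ) ^ (j - 2).natAbs * F (m - (j - 2))
      have e1 : (-1 : ℤ) ^ (j - 1).natAbs = -(-1 : ℤ) ^ j.natAbs := by
        have h := eflip (j - 1); rw [show j - 1 + 1 = j by ring] at h; linarith
      have e2 : (-1 : ℤ) ^ (j - 2).natAbs = (-1 : ℤ) ^ j.natAbs := by
        have h := eflip (j - 2); rw [show j - 2 + 1 = j - 1 by ring] at h
        rw [e1] at h; linarith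
      have hr : F (m - (j - 2)) = F (m - (j - 1)) + F (m - j) := by
        have h := hF (m - j + 2)
        rw [show m - j + 2 - 1 = m - (j - 1) by ring, show m - j + 2 - 2 = m - j by ring,
            show m - j + 2 = m - (j - 2) by ring] at h
        exact h
      rw [e1, e2, hr]; ring
    · intro j
      show F m * F (j - 1) - F (m - 1) * F j
          = (F m * F (j - 1 - 1) - F (m - 1) * F (j - 1))
            + (F m * F (j - 2 - 1) - F (m - 1) * F (j - 2))
      rw [show j - 1 - 1 = j - 2 by ring, show j - 2 - 1 = j - 3 by ring]
      have h1 := hF j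
      have h2 := hF (j - 1)
      rw [show j - 1 - 1 = j - 2 by ring, show j - 1 - 2 = j - 3 by ring] at h2
      linear_combination F m * h2 - F (m - 1) * h1
    · show (-1 : ℤ) ^ (0 : ℤ).natAbs * F (m - 0) = F m * F (0 - 1) - F (m - 1) * F 0
      norm_num [hF0, hFm1]
    · show (-1 : ℤ) ^ (1 : ℤ).natAbs * F (m - 1) = F m * F (1 - 1) - F (m - 1) * F 1
      norm_num [hF0, hF1]
  -- Lucas in terms of Fibonacci
  have Lrel : ∀ n : ℤ, L n = F (n + 1) + F (n - 1) := by
    refine fibLikeUnique L (fun n => F (n + 1) + F (n - 1)) hL ?_ ?_ ?_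
    · intro j
      show F (j + 1) + F (j - 1)
          = (F (j - 1 + 1) + F (j - 1 - 1)) + (F (j - 2 + 1) + F (j - 2 - 1))
      rw [show j - 1 + 1 = j by ring, show j - 1 - 1 = j - 2 by ring,
          show j - 2 + 1 = j - 1 by ring, show j - 2 - 1 = j - 3 by ring]
      have h1 := hFstep j
      have h2 := hF (j - 1)
      rw [show j - 1 - 1 = j - 2 by ring, show j - 1 - 2 = j - 3 by ring] at h2
      linarith
    · show L 0 = F (0 + 1) + F (0 - 1)
      norm_num [hL0, hF1, hFm1]
    · show L 1 = F (1 + 1) + F (1 - 1)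
      rw [show (1 : ℤ) + 1 = 2 by norm_num, show (1 : ℤ) - 1 = 0 by norm_num, hF2v, hF0, hL1]
      norm_num
  -- key identity in three independent variables
  have key : ∀ a b c : ℤ,
      5 * F a * F b * F c
        = F (a + b + c) - (-1 : ℤ) ^ a.natAbs * F (b + c - a)
          - (-1 : ℤ) ^ c.natAbs * L (b - c) * F a := by
    intro a b c
    have h1 := Fadd b c
    have h3 := Fadd (b - 1) (c - 1)
    rw [show b - 1 + (c - 1) + 1 = b + c - 1 by ring, show b - 1 + 1 = b by ring,
        show c - 1 + 1 = c by ring] at h3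
    have h2 := Fadd (b - 1) c
    rw [show b - 1 + c + 1 = b + c by ring, show b - 1 + 1 = b by ring] at h2
    have h4 := Fadd (a - 1) (b + c)
    rw [show a - 1 + (b + c) + 1 = a + b + c by ring, show a - 1 + 1 = a by ring] at h4
    have h5 := Fsub (b + c) a
    have h6 := Fsub (b + 1) c
    rw [show b + 1 - c = b - c + 1 by ring, show b + 1 - 1 = b by ring] at h6
    have h7 := Fsub (b - 1) c
    rw [show b - 1 - c = b - c - 1 by ring, show b - 1 - 1 = b - 2 by ring] at h7
    have h8 := Lrel (b - c)
    have hb := hFstep b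
    have hc := hFstep c
    have hb2 : F (b - 2) = F b - F (b - 1) := by
      have h := hF b; linarith
    linear_combination -h4 + h5 + ((-1 : ℤ) ^ c.natAbs * F a) * h8 + F a * h6 + F a * h7
      - F a * h1 - F a * h3 - F a * F c * hb2
      + (F a * (F (c - 1) - F (c + 1))) * hb - (F a * (F b + F (b - 1))) * hc
  rw [show 3 * k + r + s + t = (k + r) + (k + s) + (k + t) by ring,
      show k + s + t - r = (k + s) + (k + t) - (k + r) by ring,
      show s - t = (k + s) - (k + t) by ring]
  exact key (k + r) (k + s) (k + t)
end
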